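/- Let q be a prime power. The parabolic induction μ₁ × μ₂ := Ind_B^{GL(2,𝔽_q)}(μ₁ ⊠ μ₂) from the Borel subgroup B of upper triangular matrices, where the character sends diag-part (a,d) to μ₁(a)μ₂(d), has dimension q+1; it is irreducible if and only if μ₁ ≠ μ₂, and for μ₁ = μ₂ it decomposes as the direct sum of a one-dimensional representation (μ₁∘det) and a q-dimensional representation. -/

import Mathlib

set_option linter.unusedSectionVars false
set_option linter.unnecessarySeqFocus false
set_option linter.unreachableTactic false
set_option linter.unusedTactic false
set_option linter.unusedVariables false
set_option maxHeartbeats 1000000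


open Matrix

/-- The Borel subgroup of upper triangular matrices in `GL(2,F)`. -/
def Borel2 (F : Type*) [Field F] [DecidableEq F] : Subgroup (GL (Fin 2) F) where
  carrier := {g : GL (Fin 2) F |
    Matrix.BlockTriangular ((g : Matrix (Fin 2) (Fin 2) F)) id}
  one_mem' := by
    show Matrix.BlockTriangular (1 : Matrix (Fin 2) (Fin 2) F) id
    exact Matrix.blockTriangular_one
  mul_mem' := by intro a b ha hb; exact ha.mul hb
  inv_mem' := by
    intro a ha
    show Matrix.BlockTriangular ((a⁻¹ : GL (Fin 2) F) : Matrix (Fin 2) (Fin 2) F) id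
    have hco : ((a⁻¹ : GL (Fin 2) F) : Matrix (Fin 2) (Fin 2) F)
        = ((a : Matrix (Fin 2) (Fin 2) F))⁻¹ := Matrix.coe_units_inv _
    rw [hco]
    haveI : Invertible (a : Matrix (Fin 2) (Fin 2) F) := Units.invertible a
    exact Matrix.blockTriangular_inv_of_blockTriangular ha

/-- The principal series `μ₁ × μ₂ = Ind_B^{GL(2,𝔽_q)}(μ₁ ⊠ μ₂)`, realized as the
space of functions `f : GL(2,𝔽_q) → ℂ` with `f(bg) = μ₁(b₀₀) μ₂(b₁₁) f(g)` for
upper triangular `b`. -/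
noncomputable def principalSeries {F : Type*} [Field F] [DecidableEq F]
    (μ₁ μ₂ : Fˣ →* ℂˣ) : Submodule ℂ (GL (Fin 2) F → ℂ) where
  carrier := {f | ∀ b g : GL (Fin 2) F, b ∈ Borel2 F → ∀ u₁ u₂ : Fˣ,
    ((u₁ : F) = (b : Matrix (Fin 2) (Fin 2) F) 0 0) →
    ((u₂ : F) = (b : Matrix (Fin 2) (Fin 2) F) 1 1) →
    f (b * g) = (μ₁ u₁ : ℂ) * (μ₂ u₂ : ℂ) * f g}
  add_mem' := by
    intro p q hp hq b g hb u₁ u₂ h₁ h₂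
    simp only [Pi.add_apply, hp b g hb u₁ u₂ h₁ h₂, hq b g hb u₁ u₂ h₁ h₂]
    ring
  zero_mem' := by intro b g hb u₁ u₂ h₁ h₂; simp
  smul_mem' := by
    intro c p hp b g hb u₁ u₂ h₁ h₂
    simp only [Pi.smul_apply, hp b g hb u₁ u₂ h₁ h₂, smul_eq_mul]
    ring

/-- A submodule of functions on `GL(2,𝔽_q)` invariant under right translation. -/
def IsRightInvariant {F : Type*} [Field F] [DecidableEq F]
    (W : Submodule ℂ (GL (Fin 2) F → ℂ)) : Prop :=
  ∀ k : GL (Fin 2) F, ∀ f ∈ W, (fun g => f (g * k)) ∈ W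

namespace PSaux

variable {F : Type*} [Field F] [DecidableEq F]

/-- make a unit out of a nonzero field element (junk value 1 at 0) -/
noncomputable def uu (x : F) : Fˣ := if h : x = 0 then 1 else Units.mk0 x h

lemma uu_coe {x : F} (hx : x ≠ 0) : ((uu x : Fˣ) : F) = x := by
  simp [uu, hx]

lemma uu_unit (a : Fˣ) : uu ((a : F)) = a :=
  Units.ext (uu_coe a.ne_zero)

lemma uu_one : uu (1 : F) = 1 := by
  simpa using uu_unit 1

lemma uu_mul {x y : F} (hx : x ≠ 0) (hy : y ≠ 0) : uu (x * y) = uu x * uu y :=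
  Units.ext (by simp [uu_coe, hx, hy, mul_ne_zero hx hy])

/-- the character value `μ₁(b₀₀) μ₂(b₁₁)` -/
noncomputable def chi (μ₁ μ₂ : Fˣ →* ℂˣ) (b : GL (Fin 2) F) : ℂ :=
  (μ₁ (uu ((b : Matrix (Fin 2) (Fin 2) F) 0 0)) : ℂ) *
  (μ₂ (uu ((b : Matrix (Fin 2) (Fin 2) F) 1 1)) : ℂ)

/-- coset invariant: the bottom row, projectivized -/
noncomputable def piG (g : GL (Fin 2) F) : Option F :=
  if (g : Matrix (Fin 2) (Fin 2) F) 1 0 = 0 then none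
  else some ((g : Matrix (Fin 2) (Fin 2) F) 1 1 / (g : Matrix (Fin 2) (Fin 2) F) 1 0)

/-- the big-cell representatives -/
def wG (x : F) : GL (Fin 2) F :=
  ⟨!![0, 1; 1, x], !![-x, 1; 1, 0],
    by ext i j; fin_cases i <;> fin_cases j <;>
      simp [Matrix.mul_apply, Fin.sum_univ_two],
    by ext i j; fin_cases i <;> fin_cases j <;>
      simp [Matrix.mul_apply, Fin.sum_univ_two]⟩

/-- triangular elements -/
def tri (a d : Fˣ) (c : F) : GL (Fin 2) F :=
  ⟨!![(a : F), c; 0, (d : F)], !![((a : F))⁻¹, -((a : F))⁻¹ * c * ((d : F))⁻¹; 0, ((d : F))⁻¹],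
    by ext i j; fin_cases i <;> fin_cases j <;>
      simp [Matrix.mul_apply, Fin.sum_univ_two, Matrix.one_apply] <;> field_simp <;> ring,
    by ext i j; fin_cases i <;> fin_cases j <;>
      simp [Matrix.mul_apply, Fin.sum_univ_two, Matrix.one_apply] <;> field_simp <;> ring⟩

/-- coset representatives -/
noncomputable def rep : Option F → GL (Fin 2) F := fun p => p.elim 1 wG


section Basic
variable {F : Type*} [Field F] [DecidableEq F] {μ₁ μ₂ : Fˣ →* ℂˣ}

lemma tri_val (a d : Fˣ) (c : F) :
    ((tri a d c : GL (Fin 2) F) : Matrix (Fin 2) (Fin 2) F) = !![(a : F), c; 0, (d : F)] := rfl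

lemma wG_val (x : F) :
    ((wG x : GL (Fin 2) F) : Matrix (Fin 2) (Fin 2) F) = !![0, 1; 1, x] := rfl

lemma wG_inv_val (x : F) :
    (((wG x)⁻¹ : GL (Fin 2) F) : Matrix (Fin 2) (Fin 2) F) = !![-x, 1; 1, 0] := rfl

lemma rep_none : (rep none : GL (Fin 2) F) = 1 := rfl

lemma rep_some (x : F) : (rep (some x) : GL (Fin 2) F) = wG x := rfl

/-- membership in the Borel = lower-left entry vanishes -/
lemma mem_borel_iff {b : GL (Fin 2) F} :
    b ∈ Borel2 F ↔ (b : Matrix (Fin 2) (Fin 2) F) 1 0 = 0 := by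
  constructor
  · intro h
    exact h (show id (0 : Fin 2) < id 1 by norm_num)
  · intro h i j hij
    fin_cases i <;> fin_cases j <;> simp_all <;> omega

lemma det_ne_zero (g : GL (Fin 2) F) : ((g : Matrix (Fin 2) (Fin 2) F)).det ≠ 0 := by
  have : IsUnit ((g : Matrix (Fin 2) (Fin 2) F)).det :=
    (Matrix.isUnit_iff_isUnit_det _).mp g.isUnit
  exact this.ne_zero

lemma diag_ne_zero {g : GL (Fin 2) F} (h : (g : Matrix (Fin 2) (Fin 2) F) 1 0 = 0) :
    (g : Matrix (Fin 2) (Fin 2) F) 0 0 ≠ 0 ∧ (g : Matrix (Fin 2) (Fin 2) F) 1 1 ≠ 0 := by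
  have hd := det_ne_zero g
  rw [Matrix.det_fin_two, h] at hd
  simp only [mul_zero, sub_zero] at hd
  exact ⟨left_ne_zero_of_mul hd, right_ne_zero_of_mul hd⟩

lemma chi_ne_zero {b : GL (Fin 2) F} : chi μ₁ μ₂ b ≠ 0 := by
  unfold chi
  exact mul_ne_zero (Units.ne_zero _) (Units.ne_zero _)

lemma chi_one : chi μ₁ μ₂ (1 : GL (Fin 2) F) = 1 := by
  unfold chi
  have h1 : ((1 : GL (Fin 2) F) : Matrix (Fin 2) (Fin 2) F) = 1 := rfl
  rw [h1]
  simp [Matrix.one_apply, uu_one]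

/-- entries of a product -/
lemma mul_entry (a b : GL (Fin 2) F) (i j : Fin 2) :
    ((a * b : GL (Fin 2) F) : Matrix (Fin 2) (Fin 2) F) i j =
      (a : Matrix (Fin 2) (Fin 2) F) i 0 * (b : Matrix (Fin 2) (Fin 2) F) 0 j +
      (a : Matrix (Fin 2) (Fin 2) F) i 1 * (b : Matrix (Fin 2) (Fin 2) F) 1 j := by
  show ((a : Matrix (Fin 2) (Fin 2) F) * (b : Matrix (Fin 2) (Fin 2) F)) i j = _
  rw [Matrix.mul_apply, Fin.sum_univ_two]

lemma chi_mul {b b' : GL (Fin 2) F} (hb : (b : Matrix (Fin 2) (Fin 2) F) 1 0 = 0)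
    (hb' : (b' : Matrix (Fin 2) (Fin 2) F) 1 0 = 0) :
    chi μ₁ μ₂ (b * b') = chi μ₁ μ₂ b * chi μ₁ μ₂ b' := by
  obtain ⟨h00, h11⟩ := diag_ne_zero hb
  obtain ⟨h00', h11'⟩ := diag_ne_zero hb'
  have e0 : ((b * b' : GL (Fin 2) F) : Matrix (Fin 2) (Fin 2) F) 0 0 =
      (b : Matrix (Fin 2) (Fin 2) F) 0 0 * (b' : Matrix (Fin 2) (Fin 2) F) 0 0 := by
    rw [mul_entry]; rw [hb']; ring
  have e1 : ((b * b' : GL (Fin 2) F) : Matrix (Fin 2) (Fin 2) F) 1 1 =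
      (b : Matrix (Fin 2) (Fin 2) F) 1 1 * (b' : Matrix (Fin 2) (Fin 2) F) 1 1 := by
    rw [mul_entry]; rw [hb]; ring
  unfold chi
  rw [e0, e1, uu_mul h00 h00', uu_mul h11 h11', _root_.map_mul, _root_.map_mul]
  push_cast
  ring

end Basic

section Decomp
variable {F : Type*} [Field F] [DecidableEq F] {μ₁ μ₂ : Fˣ →* ℂˣ}

lemma piG_rep (p : Option F) : piG (rep p : GL (Fin 2) F) = p := by
  cases p with
  | none =>
    unfold piG
    rw [rep_none]
    simp [Units.val_one, Matrix.one_apply]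
  | some x =>
    unfold piG
    rw [rep_some, wG_val]
    norm_num

/-- `g * rep (piG g)⁻¹` is upper triangular -/
lemma tri_decomp (g : GL (Fin 2) F) :
    ((g * (rep (piG g))⁻¹ : GL (Fin 2) F) : Matrix (Fin 2) (Fin 2) F) 1 0 = 0 := by
  by_cases h : (g : Matrix (Fin 2) (Fin 2) F) 1 0 = 0
  · have hp : piG g = none := if_pos h
    rw [hp, rep_none, inv_one, mul_one]
    exact h
  · have hp : piG g = some ((g : Matrix (Fin 2) (Fin 2) F) 1 1 /
      (g : Matrix (Fin 2) (Fin 2) F) 1 0) := if_neg h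
    rw [hp, rep_some, mul_entry, wG_inv_val]
    norm_num
    field_simp
    ring

lemma decomp (g : GL (Fin 2) F) : g = (g * (rep (piG g))⁻¹) * rep (piG g) := by
  group

lemma piG_mul_left {b : GL (Fin 2) F} (hb : (b : Matrix (Fin 2) (Fin 2) F) 1 0 = 0)
    (g : GL (Fin 2) F) : piG (b * g) = piG g := by
  obtain ⟨h00, h11⟩ := diag_ne_zero hb
  have e0 : ((b * g : GL (Fin 2) F) : Matrix (Fin 2) (Fin 2) F) 1 0 =
      (b : Matrix (Fin 2) (Fin 2) F) 1 1 * (g : Matrix (Fin 2) (Fin 2) F) 1 0 := by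
    rw [mul_entry, hb]; ring
  have e1 : ((b * g : GL (Fin 2) F) : Matrix (Fin 2) (Fin 2) F) 1 1 =
      (b : Matrix (Fin 2) (Fin 2) F) 1 1 * (g : Matrix (Fin 2) (Fin 2) F) 1 1 := by
    rw [mul_entry, hb]; ring
  unfold piG
  rw [e0, e1]
  by_cases h : (g : Matrix (Fin 2) (Fin 2) F) 1 0 = 0
  · simp [h]
  · rw [if_neg (mul_ne_zero h11 h), if_neg h, mul_div_mul_left _ _ h11]

/-- reformulated membership in the principal series -/
lemma mem_PS_iff {f : GL (Fin 2) F → ℂ} :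
    f ∈ principalSeries μ₁ μ₂ ↔ ∀ b g : GL (Fin 2) F,
      (b : Matrix (Fin 2) (Fin 2) F) 1 0 = 0 → f (b * g) = chi μ₁ μ₂ b * f g := by
  constructor
  · intro hf b g hb
    obtain ⟨h00, h11⟩ := diag_ne_zero hb
    have := hf b g (mem_borel_iff.mpr hb) (uu _) (uu _) (uu_coe h00) (uu_coe h11)
    rw [this]
    unfold chi
    ring
  · intro hf b g hb u₁ u₂ h1 h2
    rw [hf b g (mem_borel_iff.mp hb)]
    unfold chi
    have e1 : uu ((b : Matrix (Fin 2) (Fin 2) F) 0 0) = u₁ := by rw [← h1]; exact uu_unit u₁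
    have e2 : uu ((b : Matrix (Fin 2) (Fin 2) F) 1 1) = u₂ := by rw [← h2]; exact uu_unit u₂
    rw [e1, e2]

lemma PS_expand {f : GL (Fin 2) F → ℂ} (hf : f ∈ principalSeries μ₁ μ₂) (g : GL (Fin 2) F) :
    f g = chi μ₁ μ₂ (g * (rep (piG g))⁻¹) * f (rep (piG g)) := by
  conv_lhs => rw [decomp g]
  exact mem_PS_iff.mp hf _ _ (tri_decomp g)

end Decomp

section Delta
variable {F : Type*} [Field F] [DecidableEq F] {μ₁ μ₂ : Fˣ →* ℂˣ}

/-- right translation as a linear map -/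
def tauL (k : GL (Fin 2) F) : (GL (Fin 2) F → ℂ) →ₗ[ℂ] (GL (Fin 2) F → ℂ) where
  toFun f := fun g => f (g * k)
  map_add' f₁ f₂ := rfl
  map_smul' c f := rfl

lemma tauL_apply (k : GL (Fin 2) F) (f : GL (Fin 2) F → ℂ) (g : GL (Fin 2) F) :
    tauL k f g = f (g * k) := rfl

lemma tauL_tauL (k k' : GL (Fin 2) F) (f : GL (Fin 2) F → ℂ) :
    tauL k (tauL k' f) = tauL (k * k') f := by
  funext g
  simp [tauL_apply, mul_assoc]

lemma PS_invariant : IsRightInvariant (principalSeries (F := F) μ₁ μ₂) := by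
  intro k f hf
  rw [mem_PS_iff] at hf ⊢
  intro b g hb
  rw [mul_assoc]
  exact hf b (g * k) hb

/-- the delta function at the coset of `rep p` -/
noncomputable def fdelta (μ₁ μ₂ : Fˣ →* ℂˣ) (p : Option F) : GL (Fin 2) F → ℂ :=
  fun g => if piG g = p then chi μ₁ μ₂ (g * (rep (piG g))⁻¹) else 0

lemma fdelta_mem (p : Option F) : fdelta μ₁ μ₂ p ∈ principalSeries μ₁ μ₂ := by
  rw [mem_PS_iff]
  intro b g hb
  unfold fdelta
  rw [piG_mul_left hb g]
  by_cases h : piG g = p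
  · rw [if_pos h, if_pos h]
    have : (b * g) * (rep (piG g))⁻¹ = b * (g * (rep (piG g))⁻¹) := by group
    rw [this, chi_mul hb (tri_decomp g)]
  · rw [if_neg h, if_neg h, mul_zero]

lemma fdelta_rep (p p' : Option F) :
    fdelta μ₁ μ₂ p (rep p') = if p' = p then 1 else 0 := by
  unfold fdelta
  rw [piG_rep]
  by_cases h : p' = p
  · rw [if_pos h, if_pos h, mul_inv_cancel, chi_one]
  · rw [if_neg h, if_neg h]

lemma fdelta_one : fdelta μ₁ μ₂ (none : Option F) (1 : GL (Fin 2) F) = 1 := by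
  have := fdelta_rep (μ₁ := μ₁) (μ₂ := μ₂) (none : Option F) none
  rw [rep_none] at this
  simpa using this

lemma fdelta_ne_zero : fdelta μ₁ μ₂ (none : Option F) ≠ 0 := by
  intro h
  have := congrFun h 1
  rw [fdelta_one] at this
  simp at this

/-- expansion of a principal series element in delta functions -/
lemma PS_sum_expand [Fintype F] {f : GL (Fin 2) F → ℂ} (hf : f ∈ principalSeries μ₁ μ₂) :
    f = ∑ p : Option F, f (rep p) • fdelta μ₁ μ₂ p := by
  funext g
  rw [Finset.sum_apply]
  rw [Finset.sum_eq_single (piG g)]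
  · simp only [Pi.smul_apply, smul_eq_mul]
    unfold fdelta
    rw [if_pos rfl]
    rw [PS_expand hf g]
    ring
  · intro p _ hp
    simp only [Pi.smul_apply, smul_eq_mul]
    unfold fdelta
    rw [if_neg (Ne.symm hp)]
    simp
  · intro h
    exact absurd (Finset.mem_univ _) h

end Delta

section Translate
variable {F : Type*} [Field F] [DecidableEq F] {μ₁ μ₂ : Fˣ →* ℂˣ}

lemma piG_act (g k : GL (Fin 2) F) : piG (g * k) = piG (rep (piG g) * k) := by
  conv_lhs => rw [decomp g]
  rw [mul_assoc]
  exact piG_mul_left (tri_decomp g) _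

/-- `σ_{k⁻¹} ∘ σ_k = id` on cosets -/
lemma sigma_inv (k : GL (Fin 2) F) (p : Option F) :
    piG (rep (piG (rep p * k)) * k⁻¹) = p := by
  have := piG_act (rep p * k) k⁻¹
  rw [mul_assoc] at this
  simp only [mul_inv_cancel, mul_one] at this
  rw [← this, piG_rep]

lemma triangular_of_piG {h : GL (Fin 2) F} {p : Option F} (hp : piG h = p) :
    ((h * (rep p)⁻¹ : GL (Fin 2) F) : Matrix (Fin 2) (Fin 2) F) 1 0 = 0 := by
  rw [← hp]; exact tri_decomp h

/-- key translation formula for delta functions -/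
lemma fdelta_translate (k : GL (Fin 2) F) (p : Option F) :
    tauL k (fdelta μ₁ μ₂ p) =
      chi μ₁ μ₂ (rep (piG (rep p * k⁻¹)) * k * (rep p)⁻¹) •
        fdelta μ₁ μ₂ (piG (rep p * k⁻¹)) := by
  set p' := piG (rep p * k⁻¹) with hp'
  have hsig : piG (rep p' * k) = p := by
    have := sigma_inv k⁻¹ p
    rwa [inv_inv] at this
  funext g
  rw [tauL_apply, Pi.smul_apply]
  by_cases h : piG g = p'
  · have hgk : piG (g * k) = p := by rw [piG_act, h, hsig]
    unfold fdelta
    rw [if_pos hgk, if_pos h, hgk]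
    have assoc1 : (g * k) * (rep p)⁻¹ = (g * (rep p')⁻¹) * (rep p' * k * (rep p)⁻¹) := by group
    have t1 : ((g * (rep p')⁻¹ : GL (Fin 2) F) : Matrix (Fin 2) (Fin 2) F) 1 0 = 0 :=
      triangular_of_piG h
    have t2 : ((rep p' * k * (rep p)⁻¹ : GL (Fin 2) F) : Matrix (Fin 2) (Fin 2) F) 1 0 = 0 :=
      triangular_of_piG hsig
    rw [assoc1, chi_mul t1 t2]
    rw [h]
    simp only [smul_eq_mul]
    ring
  · have hgk : piG (g * k) ≠ p := by
      intro hc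
      apply h
      have : piG (rep (piG (g*k)) * k⁻¹) = piG g := by
        have h2 := piG_act g k
        have h3 := piG_act (g * k) k⁻¹
        rw [mul_assoc] at h3
        simp only [mul_inv_cancel, mul_one] at h3
        rw [← h3]
      rw [hc] at this
      rw [← this]
    unfold fdelta
    rw [if_neg hgk, if_neg h, smul_zero]

end Translate

section Fzero
variable {F : Type*} [Field F] [DecidableEq F] {μ₁ μ₂ : Fˣ →* ℂˣ}

lemma inv_triangular {b : GL (Fin 2) F} (hb : (b : Matrix (Fin 2) (Fin 2) F) 1 0 = 0) :
    ((b⁻¹ : GL (Fin 2) F) : Matrix (Fin 2) (Fin 2) F) 1 0 = 0 := by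
  rw [Matrix.coe_units_inv, Matrix.inv_def, Matrix.adjugate_fin_two]
  simp [hb]

lemma piG_of_triangular {b : GL (Fin 2) F} (hb : (b : Matrix (Fin 2) (Fin 2) F) 1 0 = 0) :
    piG b = none := if_pos hb

/-- the distinguished vector supported on the Borel -/
lemma tauL_f0 {b : GL (Fin 2) F} (hb : (b : Matrix (Fin 2) (Fin 2) F) 1 0 = 0) :
    tauL b (fdelta μ₁ μ₂ none) = chi μ₁ μ₂ b • fdelta μ₁ μ₂ none := by
  have h1 : piG ((rep (none : Option F) : GL (Fin 2) F) * b⁻¹) = none := by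
    rw [rep_none, one_mul]
    exact piG_of_triangular (inv_triangular hb)
  have := fdelta_translate (μ₁ := μ₁) (μ₂ := μ₂) b (none : Option F)
  rw [h1] at this
  rw [this]
  congr 1
  rw [rep_none]
  simp

/-- every delta is a translate of `f0` -/
lemma fdelta_eq_translate (p : Option F) :
    fdelta μ₁ μ₂ p = tauL ((rep p)⁻¹ : GL (Fin 2) F) (fdelta μ₁ μ₂ none) := by
  have h1 : piG ((rep (none : Option F) : GL (Fin 2) F) * ((rep p)⁻¹)⁻¹) = p := by
    rw [rep_none, one_mul, inv_inv, piG_rep]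
  have := fdelta_translate (μ₁ := μ₁) (μ₂ := μ₂) ((rep p)⁻¹) (none : Option F)
  rw [h1] at this
  rw [this]
  have : (rep p : GL (Fin 2) F) * (rep p)⁻¹ * (rep (none : Option F))⁻¹ = 1 := by
    rw [rep_none]; group
  rw [this, chi_one, one_smul]

end Fzero

section Eigen
variable {F : Type*} [Field F] [DecidableEq F] {μ₁ μ₂ : Fˣ →* ℂˣ}

lemma tri_lower (a d : Fˣ) (c : F) :
    ((tri a d c : GL (Fin 2) F) : Matrix (Fin 2) (Fin 2) F) 1 0 = 0 := by
  rw [tri_val]; norm_num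

lemma chi_tri (a d : Fˣ) (c : F) :
    chi μ₁ μ₂ (tri a d c : GL (Fin 2) F) = (μ₁ a : ℂ) * (μ₂ d : ℂ) := by
  unfold chi
  rw [tri_val]
  norm_num [uu_unit]

lemma w0_tri_comm (a : Fˣ) :
    (wG 0 : GL (Fin 2) F) * tri a 1 0 = tri 1 a 0 * wG 0 := by
  apply Units.ext
  rw [Units.val_mul, Units.val_mul, wG_val, tri_val, tri_val]
  ext i j
  fin_cases i <;> fin_cases j <;> simp [Matrix.mul_apply, Fin.sum_univ_two]

lemma w0_n_eq (x : F) : (wG 0 : GL (Fin 2) F) * tri 1 1 x = wG x := by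
  apply Units.ext
  rw [Units.val_mul, wG_val, tri_val]
  rw [wG_val]
  ext i j
  fin_cases i <;> fin_cases j <;> simp [Matrix.mul_apply, Fin.sum_univ_two]

/-- if `μ₁ ≠ μ₂` then a right-`(B,χ)`-eigenvector in the principal series is a
multiple of the delta at `none`. -/
lemma eigen_is_f0 [Fintype F] (hμ : μ₁ ≠ μ₂) {h : GL (Fin 2) F → ℂ}
    (hPS : h ∈ principalSeries μ₁ μ₂)
    (heq : ∀ b : GL (Fin 2) F, (b : Matrix (Fin 2) (Fin 2) F) 1 0 = 0 →
      tauL b h = chi μ₁ μ₂ b • h) :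
    h = h 1 • fdelta μ₁ μ₂ none := by
  obtain ⟨a, ha⟩ : ∃ a : Fˣ, μ₁ a ≠ μ₂ a := by
    by_contra hc
    push_neg at hc
    exact hμ (MonoidHom.ext hc)
  have hw0 : h (wG 0) = 0 := by
    have e1 : h ((wG 0 : GL (Fin 2) F) * tri a 1 0) = (μ₁ a : ℂ) * h (wG 0) := by
      have := congrFun (heq (tri a 1 0) (tri_lower a 1 0)) (wG 0)
      rw [tauL_apply, Pi.smul_apply, smul_eq_mul, chi_tri] at this
      rw [this]; simp
    have e2 : h ((tri 1 a 0 : GL (Fin 2) F) * wG 0) = (μ₂ a : ℂ) * h (wG 0) := by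
      rw [mem_PS_iff.mp hPS _ _ (tri_lower 1 a 0), chi_tri]
      simp
    rw [w0_tri_comm, e2] at e1
    have : ((μ₂ a : ℂ) - (μ₁ a : ℂ)) * h (wG 0) = 0 := by
      rw [sub_mul, e1]; ring
    rcases mul_eq_zero.mp this with hz | hz
    · exfalso
      apply ha
      apply Units.ext
      have := sub_eq_zero.mp hz
      exact this.symm
    · exact hz
  have hwx : ∀ x : F, h (wG x) = 0 := by
    intro x
    have := congrFun (heq (tri 1 1 x) (tri_lower 1 1 x)) (wG 0)
    rw [tauL_apply, w0_n_eq, Pi.smul_apply, smul_eq_mul, chi_tri, hw0] at this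
    rw [this]; ring
  have hexp := PS_sum_expand hPS
  conv_lhs => rw [hexp]
  rw [Finset.sum_eq_single (none : Option F)]
  · rw [rep_none]
  · intro p _ hp
    cases p with
    | none => exact absurd rfl hp
    | some x =>
      rw [rep_some, hwx x, zero_smul]
  · intro hc
    exact absurd (Finset.mem_univ _) hc

end Eigen

section Irred
variable {F : Type*} [Field F] [Fintype F] [DecidableEq F] {μ₁ μ₂ : Fˣ →* ℂˣ}

lemma irred_of_ne (hμ : μ₁ ≠ μ₂) (W : Submodule ℂ (GL (Fin 2) F → ℂ))
    (hW : W ≤ principalSeries μ₁ μ₂) (hinv : IsRightInvariant W) (hne : W ≠ ⊥) :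
    W = principalSeries μ₁ μ₂ := by
  classical
  obtain ⟨U, hU⟩ := Submodule.exists_isCompl W
  set P0 : (GL (Fin 2) F → ℂ) →ₗ[ℂ] (GL (Fin 2) F → ℂ) :=
    W.subtype.comp (Submodule.projectionOnto W U hU) with hP0
  have hP0mem : ∀ f, P0 f ∈ W := fun f => (Submodule.projectionOnto W U hU f).2
  have hP0fix : ∀ f ∈ W, P0 f = f := by
    intro f hf
    show W.subtype (Submodule.projectionOnto W U hU f) = f
    rw [show f = ((⟨f, hf⟩ : W) : GL (Fin 2) F → ℂ) from rfl,
      Submodule.projectionOnto_apply_left hU]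
    rfl
  set cG : ℂ := (Fintype.card (GL (Fin 2) F) : ℂ) with hcG
  have hcG0 : cG ≠ 0 := by
    rw [hcG]
    exact_mod_cast Nat.cast_ne_zero.mpr Fintype.card_ne_zero
  set T : (GL (Fin 2) F → ℂ) →ₗ[ℂ] (GL (Fin 2) F → ℂ) :=
    cG⁻¹ • (∑ k : GL (Fin 2) F, (tauL k⁻¹) ∘ₗ (P0 ∘ₗ tauL k)) with hT
  have hT_apply : ∀ f, T f = cG⁻¹ • ∑ k : GL (Fin 2) F, tauL k⁻¹ (P0 (tauL k f)) := by
    intro f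
    rw [hT]
    simp [LinearMap.sum_apply]
  have hTmem : ∀ f, T f ∈ W := by
    intro f
    rw [hT_apply]
    refine Submodule.smul_mem _ _ (Submodule.sum_mem _ fun k _ => ?_)
    exact hinv k⁻¹ _ (hP0mem _)
  have hTfix : ∀ f ∈ W, T f = f := by
    intro f hf
    rw [hT_apply]
    have hterm : ∀ k : GL (Fin 2) F, tauL k⁻¹ (P0 (tauL k f)) = f := by
      intro k
      have hk : tauL k f ∈ W := hinv k f hf
      rw [hP0fix _ hk, tauL_tauL, inv_mul_cancel]
      funext g
      rw [tauL_apply, mul_one]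
    simp only [hterm, Finset.sum_const, Finset.card_univ]
    rw [← Nat.cast_smul_eq_nsmul ℂ, smul_smul, ← hcG, inv_mul_cancel₀ hcG0, one_smul]
  have hTcomm : ∀ (k₀ : GL (Fin 2) F) (f), T (tauL k₀ f) = tauL k₀ (T f) := by
    intro k₀ f
    rw [hT_apply, hT_apply, _root_.map_smul, _root_.map_sum]
    congr 1
    rw [← Equiv.sum_comp (Equiv.mulRight k₀⁻¹) (fun k => tauL k⁻¹ (P0 (tauL k (tauL k₀ f))))]
    apply Finset.sum_congr rfl
    intro j _
    simp only [Equiv.coe_mulRight]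
    rw [tauL_tauL, inv_mul_cancel_right, _root_.mul_inv_rev, inv_inv, ← tauL_tauL]
  -- the distinguished vector
  have hf0PS : fdelta μ₁ μ₂ none ∈ principalSeries μ₁ μ₂ := fdelta_mem none
  have hTf0W : T (fdelta μ₁ μ₂ none) ∈ W := hTmem _
  have hTf0PS : T (fdelta μ₁ μ₂ none) ∈ principalSeries μ₁ μ₂ := hW hTf0W
  have heig : ∀ b : GL (Fin 2) F, (b : Matrix (Fin 2) (Fin 2) F) 1 0 = 0 →
      tauL b (T (fdelta μ₁ μ₂ none)) = chi μ₁ μ₂ b • (T (fdelta μ₁ μ₂ none)) := by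
    intro b hb
    rw [← hTcomm, tauL_f0 hb, _root_.map_smul]
  have hc : T (fdelta μ₁ μ₂ none) = (T (fdelta μ₁ μ₂ none) 1) • fdelta μ₁ μ₂ none :=
    eigen_is_f0 hμ hTf0PS heig
  set c : ℂ := T (fdelta μ₁ μ₂ none) 1 with hcdef
  have hc2 : c • fdelta μ₁ μ₂ none = (c * c) • fdelta μ₁ μ₂ none := by
    have h1 : T (T (fdelta μ₁ μ₂ none)) = T (fdelta μ₁ μ₂ none) := hTfix _ hTf0W
    calc c • fdelta μ₁ μ₂ none = T (fdelta μ₁ μ₂ none) := hc.symm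
    _ = T (T (fdelta μ₁ μ₂ none)) := h1.symm
    _ = T (c • fdelta μ₁ μ₂ none) := by rw [← hc]
    _ = c • T (fdelta μ₁ μ₂ none) := _root_.map_smul T c _
    _ = c • (c • fdelta μ₁ μ₂ none) := by rw [← hc]
    _ = (c * c) • fdelta μ₁ μ₂ none := smul_smul c c _
  have hcc : c = 0 ∨ c = 1 := by
    have hz0 : (c - c * c) • fdelta μ₁ μ₂ (none : Option F) = 0 := by
      rw [sub_smul, hc2]; simp
    rcases smul_eq_zero.mp hz0 with h | h
    · have : c * (1 - c) = 0 := by linear_combination h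
      rcases mul_eq_zero.mp this with h' | h'
      · exact Or.inl h'
      · exact Or.inr (sub_eq_zero.mp h').symm
    · exact absurd h fdelta_ne_zero
  rcases hcc with h0 | h1
  · -- c = 0 : contradiction with W ≠ ⊥
    exfalso
    apply hne
    rw [eq_bot_iff]
    intro w hw
    have hTd : ∀ p : Option F, T (fdelta μ₁ μ₂ p) = 0 := by
      intro p
      rw [fdelta_eq_translate p, hTcomm, hc, h0, zero_smul, map_zero]
    have hwPS := hW hw
    have hexp := PS_sum_expand hwPS
    have hTw : T w = 0 := by
      rw [hexp, _root_.map_sum]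
      exact Finset.sum_eq_zero fun p _ => by rw [_root_.map_smul, hTd, smul_zero]
    rw [hTfix w hw] at hTw
    simp [hTw]
  · -- c = 1 : f0 ∈ W hence W = PS
    apply le_antisymm hW
    intro f hf
    have hf0W : fdelta μ₁ μ₂ none ∈ W := by
      have hTe : T (fdelta μ₁ μ₂ none) = fdelta μ₁ μ₂ none := by
        rw [hc, h1, one_smul]
      rw [← hTe]
      exact hTf0W
    have hdW : ∀ p : Option F, fdelta μ₁ μ₂ p ∈ W := by
      intro p
      rw [fdelta_eq_translate p]
      exact hinv _ _ hf0W
    rw [PS_sum_expand hf]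
    exact Submodule.sum_mem _ fun p _ => Submodule.smul_mem _ _ (hdW p)

end Irred

section Finrank
variable {F : Type*} [Field F] [Fintype F] [DecidableEq F] (μ₁ μ₂ : Fˣ →* ℂˣ)

/-- evaluation at coset representatives -/
noncomputable def evalRep : (principalSeries (F := F) μ₁ μ₂) →ₗ[ℂ] (Option F → ℂ) where
  toFun f := fun p => (f : GL (Fin 2) F → ℂ) (rep p)
  map_add' f₁ f₂ := rfl
  map_smul' c f := rfl

lemma evalRep_bijective : Function.Bijective (evalRep (F := F) μ₁ μ₂) := by
  constructor
  · intro f₁ f₂ h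
    ext g
    rw [PS_expand f₁.2 g, PS_expand f₂.2 g]
    have := congrFun h (piG g)
    simp only [evalRep] at this
    rw [show ((f₁ : GL (Fin 2) F → ℂ) (rep (piG g))) = ((f₂ : GL (Fin 2) F → ℂ) (rep (piG g)))
      from this]
  · intro copt
    refine ⟨⟨fun g => chi μ₁ μ₂ (g * (rep (piG g))⁻¹) * copt (piG g), ?_⟩, ?_⟩
    · rw [mem_PS_iff]
      intro b g hb
      have hpi : piG (b * g) = piG g := piG_mul_left hb g
      have assoc1 : (b * g) * (rep (piG g))⁻¹ = b * (g * (rep (piG g))⁻¹) := by group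
      simp only [hpi, assoc1, chi_mul hb (tri_decomp g)]
      ring
    · funext p
      simp only [evalRep]
      show chi μ₁ μ₂ (rep p * (rep (piG (rep p : GL (Fin 2) F)))⁻¹) * copt (piG (rep p)) = copt p
      rw [piG_rep, mul_inv_cancel, chi_one, one_mul]

lemma finrank_PS : Module.finrank ℂ (principalSeries (F := F) μ₁ μ₂) = Fintype.card F + 1 := by
  rw [LinearEquiv.finrank_eq (LinearEquiv.ofBijective _ (evalRep_bijective μ₁ μ₂)),
    Module.finrank_pi ℂ, Fintype.card_option]

end Finrank

section Decomposition
variable {F : Type*} [Field F] [Fintype F] [DecidableEq F] (μ₁ : Fˣ →* ℂˣ)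

/-- the one-dimensional twist of the determinant character -/
noncomputable def fdet : GL (Fin 2) F → ℂ :=
  fun g => (μ₁ (Matrix.GeneralLinearGroup.det g) : ℂ)

lemma fdet_ne_zero : fdet (F := F) μ₁ ≠ 0 := by
  intro h
  have h1 := congrFun h 1
  simp only [fdet, Pi.zero_apply] at h1
  exact Units.ne_zero _ h1

lemma det_tri_eq {b : GL (Fin 2) F} (hb : (b : Matrix (Fin 2) (Fin 2) F) 1 0 = 0) :
    ((Matrix.GeneralLinearGroup.det b : Fˣ) : F) =
      (b : Matrix (Fin 2) (Fin 2) F) 0 0 * (b : Matrix (Fin 2) (Fin 2) F) 1 1 := by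
  rw [Matrix.GeneralLinearGroup.val_det_apply, Matrix.det_fin_two, hb]
  ring

lemma fdet_in_PS : fdet (F := F) μ₁ ∈ principalSeries μ₁ μ₁ := by
  rw [mem_PS_iff]
  intro b g hb
  obtain ⟨h00, h11⟩ := diag_ne_zero hb
  unfold fdet
  rw [_root_.map_mul, _root_.map_mul]
  have hdet : Matrix.GeneralLinearGroup.det b = uu ((b : Matrix (Fin 2) (Fin 2) F) 0 0) *
      uu ((b : Matrix (Fin 2) (Fin 2) F) 1 1) := by
    apply Units.ext
    rw [det_tri_eq hb]
    push_cast
    rw [uu_coe h00, uu_coe h11]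
  rw [hdet, _root_.map_mul]
  unfold chi
  push_cast
  ring

lemma fdet_translate (k : GL (Fin 2) F) :
    tauL k (fdet (F := F) μ₁) = (μ₁ (Matrix.GeneralLinearGroup.det k) : ℂ) • fdet μ₁ := by
  funext g
  rw [tauL_apply, Pi.smul_apply]
  unfold fdet
  rw [_root_.map_mul, _root_.map_mul]
  push_cast
  rw [smul_eq_mul]
  ring

end Decomposition

section DecompMain
variable {F : Type*} [Field F] [Fintype F] [DecidableEq F] (μ₁ : Fˣ →* ℂˣ)

/-- the invariant linear functional pairing against `fdet⁻¹` -/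
noncomputable def Lfun : (GL (Fin 2) F → ℂ) →ₗ[ℂ] ℂ where
  toFun f := ∑ g : GL (Fin 2) F, f g * (((μ₁ (Matrix.GeneralLinearGroup.det g))⁻¹ : ℂˣ) : ℂ)
  map_add' f₁ f₂ := by
    simp only [Pi.add_apply, add_mul]
    rw [Finset.sum_add_distrib]
  map_smul' c f := by
    simp only [Pi.smul_apply, smul_eq_mul, RingHom.id_apply]
    rw [Finset.mul_sum]
    apply Finset.sum_congr rfl
    intros
    ring

lemma Lfun_fdet : Lfun μ₁ (fdet (F := F) μ₁) = (Fintype.card (GL (Fin 2) F) : ℂ) := by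
  unfold Lfun fdet
  simp only [LinearMap.coe_mk, AddHom.coe_mk]
  rw [Finset.sum_congr rfl (fun g _ => ?_), Finset.sum_const, Finset.card_univ, nsmul_eq_mul,
    mul_one]
  rw [← Units.val_mul, mul_inv_cancel, Units.val_one]

lemma Lfun_translate (k : GL (Fin 2) F) (f : GL (Fin 2) F → ℂ) :
    Lfun μ₁ (tauL k f) = (μ₁ (Matrix.GeneralLinearGroup.det k) : ℂ) * Lfun μ₁ f := by
  unfold Lfun
  simp only [LinearMap.coe_mk, AddHom.coe_mk, tauL_apply]
  rw [Finset.mul_sum]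
  rw [← Equiv.sum_comp (Equiv.mulRight k⁻¹) (fun g => f (g * k) *
    (((μ₁ (Matrix.GeneralLinearGroup.det g))⁻¹ : ℂˣ) : ℂ))]
  apply Finset.sum_congr rfl
  intro g _
  simp only [Equiv.coe_mulRight, inv_mul_cancel_right]
  have hd : (μ₁ (Matrix.GeneralLinearGroup.det (g * k⁻¹)))⁻¹ =
      μ₁ (Matrix.GeneralLinearGroup.det k) * (μ₁ (Matrix.GeneralLinearGroup.det g))⁻¹ := by
    rw [_root_.map_mul, _root_.map_mul, map_inv, map_inv, _root_.mul_inv_rev, inv_inv]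
  rw [hd, Units.val_mul]
  ring

lemma decomp_main :
    ∃ W₁ W₂ : Submodule ℂ (GL (Fin 2) F → ℂ),
      W₁ ≤ principalSeries μ₁ μ₁ ∧ W₂ ≤ principalSeries μ₁ μ₁ ∧
      IsRightInvariant W₁ ∧ IsRightInvariant W₂ ∧
      W₁ ⊔ W₂ = principalSeries μ₁ μ₁ ∧ W₁ ⊓ W₂ = ⊥ ∧
      Module.finrank ℂ W₁ = 1 ∧ Module.finrank ℂ W₂ = Fintype.card F ∧
      (fun g : GL (Fin 2) F => (μ₁ (Matrix.GeneralLinearGroup.det g) : ℂ)) ∈ W₁ := by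
  classical
  set W₁ : Submodule ℂ (GL (Fin 2) F → ℂ) := Submodule.span ℂ {fdet μ₁} with hW₁
  set W₂ : Submodule ℂ (GL (Fin 2) F → ℂ) :=
    principalSeries μ₁ μ₁ ⊓ LinearMap.ker (Lfun μ₁) with hW₂
  have hcard : (Fintype.card (GL (Fin 2) F) : ℂ) ≠ 0 :=
    Nat.cast_ne_zero.mpr Fintype.card_ne_zero
  have hle1 : W₁ ≤ principalSeries μ₁ μ₁ := by
    rw [hW₁, Submodule.span_le, Set.singleton_subset_iff]
    exact fdet_in_PS μ₁
  have hle2 : W₂ ≤ principalSeries μ₁ μ₁ := inf_le_left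
  have hinv1 : IsRightInvariant W₁ := by
    intro k f hf
    obtain ⟨a, ha⟩ := Submodule.mem_span_singleton.mp hf
    have : (fun g => f (g * k)) = (a * (μ₁ (Matrix.GeneralLinearGroup.det k) : ℂ)) • fdet μ₁ := by
      funext g
      have hfg : f (g * k) = a * fdet μ₁ (g * k) := by rw [← ha]; rfl
      rw [Pi.smul_apply, smul_eq_mul, hfg]
      unfold fdet
      rw [_root_.map_mul, _root_.map_mul]
      push_cast
      ring
    rw [this]
    exact Submodule.smul_mem _ _ (Submodule.mem_span_singleton_self _)
  have hinv2 : IsRightInvariant W₂ := by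
    intro k f hf
    obtain ⟨hfPS, hfK⟩ := hf
    constructor
    · exact PS_invariant k f hfPS
    · show Lfun μ₁ (tauL k f) = 0
      rw [Lfun_translate, LinearMap.mem_ker.mp hfK, mul_zero]
  have hmemdet : fdet μ₁ ∈ W₁ := Submodule.mem_span_singleton_self _
  have hsup : W₁ ⊔ W₂ = principalSeries μ₁ μ₁ := by
    apply le_antisymm (sup_le hle1 hle2)
    intro f hf
    set a : ℂ := Lfun μ₁ f / (Fintype.card (GL (Fin 2) F) : ℂ) with hadef
    have h1 : a • fdet μ₁ ∈ W₁ := Submodule.smul_mem _ _ hmemdet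
    have h2 : f - a • fdet μ₁ ∈ W₂ := by
      constructor
      · exact Submodule.sub_mem _ hf (Submodule.smul_mem _ _ (fdet_in_PS μ₁))
      · show Lfun μ₁ (f - a • fdet μ₁) = 0
        rw [map_sub, _root_.map_smul, Lfun_fdet, smul_eq_mul, hadef]
        field_simp
        ring
    have hsplit : f = a • fdet μ₁ + (f - a • fdet μ₁) := by abel
    rw [hsplit]
    exact Submodule.add_mem_sup h1 h2
  have hinf : W₁ ⊓ W₂ = ⊥ := by
    rw [eq_bot_iff]
    rintro f ⟨hf1, _, hf2⟩
    obtain ⟨a, ha⟩ := Submodule.mem_span_singleton.mp hf1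
    have hL : Lfun μ₁ f = a * (Fintype.card (GL (Fin 2) F) : ℂ) := by
      rw [← ha, _root_.map_smul, Lfun_fdet, smul_eq_mul]
    rw [LinearMap.mem_ker.mp hf2] at hL
    have ha0 : a = 0 := by
      rcases mul_eq_zero.mp hL.symm with h | h
      · exact h
      · exact absurd h hcard
    rw [Submodule.mem_bot, ← ha, ha0, zero_smul]
  have hrk1 : Module.finrank ℂ W₁ = 1 := by
    rw [hW₁]
    exact finrank_span_singleton (fdet_ne_zero μ₁)
  have hrk2 : Module.finrank ℂ W₂ = Fintype.card F := by
    have := Submodule.finrank_sup_add_finrank_inf_eq W₁ W₂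
    rw [hsup, hinf, finrank_PS, hrk1, finrank_bot] at this
    omega
  exact ⟨W₁, W₂, hle1, hle2, hinv1, hinv2, hsup, hinf, hrk1, hrk2, hmemdet⟩

end DecompMain

end PSaux

open PSaux

/-- The principal series `μ₁ × μ₂` of `GL(2,𝔽_q)` has dimension `q+1`; it is
irreducible iff `μ₁ ≠ μ₂`; for `μ₁ = μ₂` it is the direct sum of the
one-dimensional representation `μ₁ ∘ det` and a `q`-dimensional representation. -/
theorem stmt15 {F : Type*} [Field F] [Fintype F] [DecidableEq F] (q : ℕ)
    (hq : Fintype.card F = q) (μ₁ μ₂ : Fˣ →* ℂˣ) :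
    Module.finrank ℂ (principalSeries (F := F) μ₁ μ₂) = q + 1 ∧
    ((∀ W : Submodule ℂ (GL (Fin 2) F → ℂ), W ≤ principalSeries μ₁ μ₂ →
        IsRightInvariant W → W = ⊥ ∨ W = principalSeries μ₁ μ₂) ↔ μ₁ ≠ μ₂) ∧
    (μ₁ = μ₂ → ∃ W₁ W₂ : Submodule ℂ (GL (Fin 2) F → ℂ),
      W₁ ≤ principalSeries μ₁ μ₂ ∧ W₂ ≤ principalSeries μ₁ μ₂ ∧
      IsRightInvariant W₁ ∧ IsRightInvariant W₂ ∧
      W₁ ⊔ W₂ = principalSeries μ₁ μ₂ ∧ W₁ ⊓ W₂ = ⊥ ∧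
      Module.finrank ℂ W₁ = 1 ∧ Module.finrank ℂ W₂ = q ∧
      (fun g : GL (Fin 2) F => (μ₁ (Matrix.GeneralLinearGroup.det g) : ℂ)) ∈ W₁) := by

  subst hq
  refine ⟨finrank_PS μ₁ μ₂, ⟨?_, ?_⟩, ?_⟩
  · -- irreducibility implies μ₁ ≠ μ₂
    intro hprop
    intro heq
    subst heq
    obtain ⟨W₁, W₂, hle1, hle2, hinv1, hinv2, hsup, hinf, hrk1, hrk2, hmem⟩ := decomp_main μ₁
    rcases hprop W₁ hle1 hinv1 with hbot | htop
    · rw [hbot, finrank_bot] at hrk1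
      exact absurd hrk1 (by norm_num)
    · rw [htop, finrank_PS] at hrk1
      have := Fintype.card_pos (α := F)
      omega
  · -- μ₁ ≠ μ₂ implies irreducibility
    intro hμ W hle hinv
    by_cases hb : W = ⊥
    · exact Or.inl hb
    · exact Or.inr (irred_of_ne hμ W hle hinv hb)
  · intro heq
    subst heq
    exact decomp_main μ₁
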